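/- Generalized Heine theorem: Let μ be a finite Borel measure on ℝ such that ∫|x|^m dμ(x) < ∞ for all m ≥ 0, and let c_m = ∫ x^m dμ(x) be its moments. Let n ≥ 1 and k ≥ 1 be integers. Then ∫_{ℝ^n} Δ(x)^{2k} dμ(x₁)⋯dμ(x_n) = n! · Det(M), where M is the hypermatrix of order 2k and dimension n with entries M(i₁,…,i_{2k}) = c_{i₁+⋯+i_{2k}} for indices i₁,…,i_{2k} ∈ {0,…,n−1}. -/

import Mathlib

open MeasureTheory Nat

/-- The Vandermonde product `Δ(x) = ∏_{i<j} (x_j - x_i)`. -/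
def vandermonde {n : ℕ} (x : Fin n → ℝ) : ℝ :=
  ∏ p ∈ Finset.univ.filter (fun p : Fin n × Fin n => p.1 < p.2), (x p.2 - x p.1)

lemma vandermonde_eq_sum {n : ℕ} (x : Fin n → ℝ) :
    vandermonde x = ∑ σ : Equiv.Perm (Fin n),
      ((Equiv.Perm.sign σ : ℤ) : ℝ) * ∏ i, x i ^ ((σ i : ℕ)) := by
  have h2 : vandermonde x = (Matrix.vandermonde x).det := by
    rw [Matrix.det_vandermonde, vandermonde]
    rw [← Finset.prod_sigma (Finset.univ : Finset (Fin n)) (fun i => Finset.Ioi i)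
      (fun q => x q.2 - x q.1)]
    refine Finset.prod_bij' (fun p _ => ⟨p.1, p.2⟩) (fun q _ => (q.1, q.2)) ?_ ?_ ?_ ?_ ?_
    · intro p hp
      simp only [Finset.mem_filter, Finset.mem_univ, true_and] at hp
      simp [Finset.mem_sigma, Finset.mem_Ioi, hp]
    · intro q hq
      simp only [Finset.mem_sigma, Finset.mem_univ, Finset.mem_Ioi, true_and] at hq
      simp [hq]
    · intro p _; rfl
    · intro q _; rfl
    · intro p _; rfl
  rw [h2, ← Matrix.det_transpose, Matrix.det_apply']
  rfl

/-- The hyperdeterminant of a hypermatrix of order `m` and dimension `n`: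
`Det(M) = (1/n!) ∑_{σ₁,…,σ_m ∈ S_n} sign(σ₁)⋯sign(σ_m) ∏_i M(σ₁(i),…,σ_m(i))`. -/
noncomputable def hypDet {m n : ℕ} (M : (Fin m → Fin n) → ℝ) : ℝ :=
  (1 / (n ! : ℝ)) * ∑ σ : Fin m → Equiv.Perm (Fin n),
    (∏ s, ((Equiv.Perm.sign (σ s) : ℤ) : ℝ)) * ∏ i, M fun s => σ s i

/-- Generalized Heine theorem: the `2k`-fold analogue of Heine's integral is
`n!` times the Hankel hyperdeterminant of the moments of `μ`. -/
theorem generalized_heine (n k : ℕ) (hn : 1 ≤ n) (hk : 1 ≤ k)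
    (μ : Measure ℝ) [IsFiniteMeasure μ]
    (hmom : ∀ m : ℕ, Integrable (fun x : ℝ => |x| ^ m) μ) :
    (∫ x : Fin n → ℝ, vandermonde x ^ (2 * k) ∂(Measure.pi fun _ => μ)) =
      (n ! : ℝ) *
        hypDet (fun t : Fin (2 * k) → Fin n => ∫ x : ℝ, x ^ (∑ s, (t s : ℕ)) ∂μ) := by
  classical
  have hint : ∀ m : ℕ, Integrable (fun x : ℝ => x ^ m) μ := by
    intro m
    refine (hmom m).mono' ((measurable_id.pow_const m).aestronglyMeasurable) ?_
    filter_upwards with x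
    rw [Real.norm_eq_abs, abs_pow]
  letI : MeasureSpace ℝ := ⟨μ⟩
  have expand : ∀ x : Fin n → ℝ, vandermonde x ^ (2 * k) =
      ∑ σ : Fin (2 * k) → Equiv.Perm (Fin n),
        (∏ s, ((Equiv.Perm.sign (σ s) : ℤ) : ℝ)) * ∏ i, x i ^ (∑ s, ((σ s i : ℕ))) := by
    intro x
    rw [vandermonde_eq_sum, Fintype.sum_pow]
    refine Finset.sum_congr rfl fun σ _ => ?_
    rw [Finset.prod_mul_distrib]
    congr 1
    rw [Finset.prod_comm]
    exact Finset.prod_congr rfl fun i _ => Finset.prod_pow_eq_pow_sum _ _ _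
  have hInt : ∀ e : Fin n → ℕ,
      Integrable (fun x : Fin n → ℝ => ∏ i, x i ^ e i) (Measure.pi fun _ => μ) := by
    intro e
    exact Integrable.fintype_prod (f := fun i (x : ℝ) => x ^ e i) (fun i => hint (e i))
  have hFub : ∀ e : Fin n → ℕ,
      (∫ x : Fin n → ℝ, ∏ i, x i ^ e i ∂(Measure.pi fun _ => μ)) =
        ∏ i, ∫ x : ℝ, x ^ e i ∂μ := by
    intro e
    exact integral_fintype_prod_eq_prod (ι := Fin n) (fun i (x : ℝ) => x ^ e i)
  calc (∫ x : Fin n → ℝ, vandermonde x ^ (2 * k) ∂(Measure.pi fun _ => μ))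
      = ∫ x : Fin n → ℝ, (∑ σ : Fin (2 * k) → Equiv.Perm (Fin n),
          (∏ s, ((Equiv.Perm.sign (σ s) : ℤ) : ℝ)) * ∏ i, x i ^ (∑ s, ((σ s i : ℕ))))
            ∂(Measure.pi fun _ => μ) := by
        exact integral_congr_ae (Filter.Eventually.of_forall fun x => expand x)
    _ = ∑ σ : Fin (2 * k) → Equiv.Perm (Fin n),
          ∫ x : Fin n → ℝ, (∏ s, ((Equiv.Perm.sign (σ s) : ℤ) : ℝ)) *
            ∏ i, x i ^ (∑ s, ((σ s i : ℕ))) ∂(Measure.pi fun _ => μ) := by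
        exact integral_finset_sum _ (fun σ _ => (hInt _).const_mul _)
    _ = ∑ σ : Fin (2 * k) → Equiv.Perm (Fin n),
          (∏ s, ((Equiv.Perm.sign (σ s) : ℤ) : ℝ)) *
            ∏ i, ∫ x : ℝ, x ^ (∑ s, ((σ s i : ℕ))) ∂μ := by
        refine Finset.sum_congr rfl fun σ _ => ?_
        rw [integral_const_mul, hFub]
    _ = (n ! : ℝ) *
        hypDet (fun t : Fin (2 * k) → Fin n => ∫ x : ℝ, x ^ (∑ s, (t s : ℕ)) ∂μ) := by
        rw [hypDet, ← mul_assoc, mul_one_div, div_self (by positivity : (n ! : ℝ) ≠ 0), one_mul]
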